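/- Let H be a real inner product space, let V and W be linear subspaces of H, and suppose the strengthened Cauchy–Schwarz inequality holds between V and W: there exists δ ∈ [0, 1) such that |⟨v, w⟩| ≤ δ ‖v‖ ‖w‖ for all v ∈ V and w ∈ W. Then for all φᶜ ∈ V and φᶠ ∈ W: (1 − δ²) ‖φᶠ‖² ≤ ‖φᶜ + φᶠ‖². -/

import Mathlib

/-- If the strengthened Cauchy–Schwarz inequality
`|⟨v,w⟩| ≤ δ‖v‖‖w‖` holds uniformly between subspaces `V` and `W` of a real
inner product space `H` with `δ ∈ [0,1)`, then for all `φᶜ ∈ V`, `φᶠ ∈ W`: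
`(1 − δ²)‖φᶠ‖² ≤ ‖φᶜ + φᶠ‖²`. -/
theorem strengthened_cauchy_schwarz_lower_bound
    {H : Type*} [NormedAddCommGroup H] [InnerProductSpace ℝ H]
    (V W : Submodule ℝ H)
    (δ : ℝ) (hδ : δ ∈ Set.Ico (0 : ℝ) 1)
    (hCS : ∀ v ∈ V, ∀ w ∈ W, |(inner ℝ v w : ℝ)| ≤ δ * ‖v‖ * ‖w‖)
    (φc : H) (hφc : φc ∈ V) (φf : H) (hφf : φf ∈ W) :
    (1 - δ ^ 2) * ‖φf‖ ^ 2 ≤ ‖φc + φf‖ ^ 2 := by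
  have hexp : ‖φc + φf‖ ^ 2 = ‖φc‖ ^ 2 + 2 * (inner ℝ φc φf : ℝ) + ‖φf‖ ^ 2 := by
    rw [← real_inner_self_eq_norm_sq, ← real_inner_self_eq_norm_sq,
      ← real_inner_self_eq_norm_sq, inner_add_add_self, real_inner_comm φf φc]
    ring
  have h1 := hCS φc hφc φf hφf
  have h2 : -(δ * ‖φc‖ * ‖φf‖) ≤ (inner ℝ φc φf : ℝ) := neg_le_of_abs_le h1
  have hsq : 0 ≤ (‖φc‖ - δ * ‖φf‖) ^ 2 := sq_nonneg _
  nlinarith [hexp, h2, hsq]
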